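/- Let B be an even positive integer and γ > 0. Let σ be a probability mass function on Fin B, let S* = { x ∈ Fin B : σ(x) ≤ B^{7γ−1} }, and assume σ(S*) ≥ 1/5. Let t be drawn uniformly at random from all 2^{B/2} pair-selections, and define f*(t) = Σ_{x ∈ T(t) ∩ S*} σ(x). Then Pr[ f*(t) < 1/20 ] ≤ exp( −B^{1−7γ}/80 ). (Equivalently, the number of pair-selections t with f*(t) < 1/20 is at most 2^{B/2}·exp(−B^{1−7γ}/80).) -/

import Mathlib

open Finset

/-- `memT t x` : the element `x ∈ Fin B` belongs to the set `T(t)` determined by the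
pair-selection `t : Fin (B/2) → Bool`, namely `T(t) = { 2k + (if t k then 1 else 0) }`. -/
def memT {B : ℕ} (t : Fin (B / 2) → Bool) (x : Fin B) : Prop :=
  ∃ k : Fin (B / 2), (x : ℕ) = 2 * (k : ℕ) + (if t k then 1 else 0)

instance {B : ℕ} (t : Fin (B / 2) → Bool) (x : Fin B) : Decidable (memT t x) := by
  unfold memT; infer_instance

/-- `f*(t) = ∑_{x ∈ T(t) ∩ S*} σ(x)`, where `S* = { x : σ x ≤ c }`. -/
noncomputable def fstar {B : ℕ} (σ : Fin B → ℝ) (c : ℝ) (t : Fin (B / 2) → Bool) : ℝ :=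
  ∑ x : Fin B, if memT t x ∧ σ x ≤ c then σ x else 0

theorem stmt3 (B : ℕ) (hB : 0 < B) (hBe : 2 ∣ B) (γ : ℝ) (hγ : 0 < γ)
    (σ : Fin B → ℝ) (hσ0 : ∀ x, 0 ≤ σ x) (hσ1 : (∑ x, σ x) = 1)
    -- σ assigns mass at least 1/5 to S* = { x : σ x ≤ B^(7γ−1) }
    (hmass : 1 / 5 ≤ ∑ x : Fin B, if σ x ≤ (B : ℝ) ^ (7 * γ - 1) then σ x else 0) :
    (((univ.filter fun t : Fin (B / 2) → Bool =>
          fstar σ ((B : ℝ) ^ (7 * γ - 1)) t < 1 / 20).card : ℝ)) ≤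
      2 ^ (B / 2) * Real.exp (-(B : ℝ) ^ ((1 : ℝ) - 7 * γ) / 80) := by
  classical
  have hB0 : (0 : ℝ) < B := by exact_mod_cast hB
  set c : ℝ := (B : ℝ) ^ (7 * γ - 1) with hc
  have hcpos : 0 < c := Real.rpow_pos_of_pos hB0 _
  set s : ℝ := Real.log 2 / c with hsdef
  have hspos : 0 < s := div_pos (Real.log_pos one_lt_two) hcpos
  -- the embedding (k, b) ↦ 2k + b
  have hlt : ∀ (k : Fin (B / 2)) (b : Bool), 2 * (k : ℕ) + (if b then 1 else 0) < B := by
    intro k b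
    have hk := k.isLt
    have h2 : B / 2 * 2 = B := Nat.div_mul_cancel hBe
    cases b <;> simp <;> omega
  set e : Fin (B / 2) × Bool → Fin B :=
    fun p => ⟨2 * p.1 + (if p.2 then 1 else 0), hlt p.1 p.2⟩ with he
  have hbij : Function.Bijective e := by
    rw [Fintype.bijective_iff_injective_and_card]
    constructor
    · rintro ⟨k, b⟩ ⟨k', b'⟩ h
      have hval : 2 * (k : ℕ) + (if b then 1 else 0)
          = 2 * (k' : ℕ) + (if b' then 1 else 0) := congrArg Fin.val h
      cases b <;> cases b' <;> simp at hval <;>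
        simp [Prod.ext_iff, Fin.ext_iff] <;> omega
    · have h2 : B / 2 * 2 = B := Nat.div_mul_cancel hBe
      simp [Fintype.card_prod, h2]
  have hmemT : ∀ (t : Fin (B / 2) → Bool) (k : Fin (B / 2)) (b : Bool),
      memT t (e (k, b)) ↔ t k = b := by
    intro t k b
    constructor
    · rintro ⟨k', hk'⟩
      have hval : 2 * (k : ℕ) + (if b then 1 else 0)
          = 2 * (k' : ℕ) + (if t k' then 1 else 0) := hk'
      have hkk : k = k' := by
        cases b <;> cases h' : t k' <;> simp [h'] at hval <;> exact Fin.ext (by omega)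
      subst hkk
      cases b <;> cases h' : t k <;> simp [h'] at hval ⊢ <;> omega
    · intro h
      exact ⟨k, by simp [he, h]⟩
  set g : Fin (B / 2) → Bool → ℝ :=
    fun k b => if σ (e (k, b)) ≤ c then σ (e (k, b)) else 0 with hg
  have hg0 : ∀ k b, 0 ≤ g k b := by
    intro k b; simp only [hg]; split
    · exact hσ0 _
    · exact le_rfl
  have hgc : ∀ k b, g k b ≤ c := by
    intro k b; simp only [hg]; split
    · assumption
    · exact hcpos.le
  have hfstar : ∀ t, fstar σ c t = ∑ k, g k (t k) := by
    intro t
    have h1 : fstar σ c t = ∑ p : Fin (B / 2) × Bool,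
        (if memT t (e p) ∧ σ (e p) ≤ c then σ (e p) else 0) :=
      (Fintype.sum_bijective e hbij _ _ (fun p => rfl)).symm
    rw [h1, Fintype.sum_prod_type]
    refine Finset.sum_congr rfl fun k _ => ?_
    have hrw : ∀ b : Bool, (if memT t (e (k, b)) ∧ σ (e (k, b)) ≤ c then σ (e (k, b)) else 0)
        = if t k = b then g k b else 0 := by
      intro b
      by_cases hb : t k = b
      · simp [hb, hmemT t k b, hg]
      · simp [hb, hmemT t k b]
    rw [Fintype.sum_bool, hrw, hrw]
    cases h' : t k <;> simp [h']
  have hm : (∑ x : Fin B, if σ x ≤ c then σ x else 0) = ∑ k, (g k false + g k true) := by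
    rw [← Fintype.sum_bijective e hbij (fun p => if σ (e p) ≤ c then σ (e p) else 0)
        (fun x => if σ x ≤ c then σ x else 0) (fun p => rfl)]
    rw [Fintype.sum_prod_type]
    refine Finset.sum_congr rfl fun k _ => ?_
    rw [Fintype.sum_bool]
    simp only [hg]
    ring
  set M : ℝ := ∑ k, (g k false + g k true) with hM
  have hm5 : (1 : ℝ) / 5 ≤ M := by rw [← hm]; exact hmass
  -- convexity bound
  have key : ∀ x : ℝ, 0 ≤ x → x ≤ c → Real.exp (-(s * x)) ≤ 1 - x / (2 * c) := by
    intro x hx hxc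
    have hθ0 : 0 ≤ x / c := div_nonneg hx hcpos.le
    have hθ1 : x / c ≤ 1 := (div_le_one hcpos).mpr hxc
    have hcv := convexOn_exp.2 (Set.mem_univ (0 : ℝ)) (Set.mem_univ (-(s * c)))
        (by linarith : (0:ℝ) ≤ 1 - x / c) hθ0 (by ring)
    have hsc : s * c = Real.log 2 := by
      rw [hsdef]; field_simp
    have hexp : Real.exp (-(s * c)) = 1 / 2 := by
      rw [hsc, Real.exp_neg, Real.exp_log two_pos]; norm_num
    have harg : (1 - x / c) • (0 : ℝ) + (x / c) • (-(s * c)) = -(s * x) := by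
      simp only [smul_eq_mul, mul_zero, zero_add]
      field_simp
    rw [harg] at hcv
    rw [smul_eq_mul, smul_eq_mul, Real.exp_zero, hexp] at hcv
    have h2 : (1 - x / c) * 1 + (x / c) * (1 / 2) = 1 - x / (2 * c) := by
      field_simp; ring
    linarith
  have factor : ∀ k, Real.exp (-(s * g k false)) + Real.exp (-(s * g k true))
      ≤ 2 * Real.exp (-((g k false + g k true) / (4 * c))) := by
    intro k
    have h1 := key _ (hg0 k false) (hgc k false)
    have h2 := key _ (hg0 k true) (hgc k true)
    have h3 : 1 - (g k false + g k true) / (4 * c)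
        ≤ Real.exp (-((g k false + g k true) / (4 * c))) := by
      have := Real.add_one_le_exp (-((g k false + g k true) / (4 * c)))
      linarith
    have hring : (1 - g k false / (2 * c)) + (1 - g k true / (2 * c))
        = 2 * (1 - (g k false + g k true) / (4 * c)) := by
      field_simp; ring
    linarith
  set F : (Fin (B / 2) → Bool) → ℝ := fun t => ∑ k, g k (t k) with hF
  -- step 1 : count ≤ exponential sum
  have step1 : ((univ.filter fun t : Fin (B / 2) → Bool => fstar σ c t < 1 / 20).card : ℝ)
      ≤ ∑ t : Fin (B / 2) → Bool, Real.exp (s / 20 - s * F t) := by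
    have hcard : ((univ.filter fun t : Fin (B / 2) → Bool => fstar σ c t < 1 / 20).card : ℝ)
        = ∑ t ∈ (univ.filter fun t : Fin (B / 2) → Bool => fstar σ c t < 1 / 20), (1 : ℝ) := by
      simp
    rw [hcard]
    refine le_trans (Finset.sum_le_sum ?_)
      (Finset.sum_le_sum_of_subset_of_nonneg (Finset.filter_subset _ _)
        (fun t _ _ => (Real.exp_pos _).le))
    intro t ht
    rw [Finset.mem_filter] at ht
    have hlt2 := ht.2
    rw [hfstar] at hlt2
    have hFt : F t < 1 / 20 := hlt2
    have hmul : s * F t ≤ s * (1 / 20) := mul_le_mul_of_nonneg_left hFt.le hspos.le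
    have : (0:ℝ) ≤ s / 20 - s * F t := by linarith
    calc (1:ℝ) = Real.exp 0 := Real.exp_zero.symm
      _ ≤ Real.exp (s / 20 - s * F t) := Real.exp_le_exp.mpr this
  -- step 2 : factorize
  have step2 : (∑ t : Fin (B / 2) → Bool, Real.exp (s / 20 - s * F t))
      = Real.exp (s / 20) *
        ∏ k, (Real.exp (-(s * g k false)) + Real.exp (-(s * g k true))) := by
    have hterm : ∀ t, Real.exp (s / 20 - s * F t)
        = Real.exp (s / 20) * ∏ k, Real.exp (-(s * g k (t k))) := by
      intro t
      rw [← Real.exp_sum, ← Real.exp_add]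
      congr 1
      have hsum : ∑ k, -(s * g k (t k)) = -(s * F t) := by
        rw [hF, Finset.mul_sum, ← Finset.sum_neg_distrib]
      rw [hsum]; ring
    simp_rw [hterm]
    rw [← Finset.mul_sum]
    congr 1
    rw [← Fintype.prod_sum (fun k b => Real.exp (-(s * g k b)))]
    refine Finset.prod_congr rfl fun k _ => ?_
    rw [Fintype.sum_bool, add_comm]
  -- step 3 : bound the product
  have step3 : (∏ k, (Real.exp (-(s * g k false)) + Real.exp (-(s * g k true))))
      ≤ 2 ^ (B / 2) * Real.exp (-(M / (4 * c))) := by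
    calc (∏ k, (Real.exp (-(s * g k false)) + Real.exp (-(s * g k true))))
        ≤ ∏ k, 2 * Real.exp (-((g k false + g k true) / (4 * c))) :=
          Finset.prod_le_prod (fun k _ => by positivity) (fun k _ => factor k)
      _ = 2 ^ (B / 2) * Real.exp (-(M / (4 * c))) := by
          rw [Finset.prod_mul_distrib, Finset.prod_const, ← Real.exp_sum]
          simp only [Finset.card_univ, Fintype.card_fin]
          congr 1
          rw [hM, Finset.sum_div, ← Finset.sum_neg_distrib]
  -- numeric comparison of exponents
  have hcinv : (B : ℝ) ^ ((1 : ℝ) - 7 * γ) = 1 / c := by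
    rw [hc, one_div, ← Real.rpow_neg hB0.le]
    congr 1; ring
  have hexp_le : s / 20 - M / (4 * c) ≤ -(B : ℝ) ^ ((1 : ℝ) - 7 * γ) / 80 := by
    rw [hcinv]
    have e1 : s / 20 - M / (4 * c) = (Real.log 2 / 20 - M / 4) * (1 / c) := by
      rw [hsdef]; field_simp
    have e2 : -(1 / c) / 80 = (-(1 : ℝ) / 80) * (1 / c) := by ring
    rw [e1, e2]
    apply mul_le_mul_of_nonneg_right _ (by positivity)
    linarith [Real.log_two_lt_d9, hm5]
  -- assemble
  calc ((univ.filter fun t : Fin (B / 2) → Bool => fstar σ c t < 1 / 20).card : ℝ)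
      ≤ ∑ t : Fin (B / 2) → Bool, Real.exp (s / 20 - s * F t) := step1
    _ = Real.exp (s / 20) *
        ∏ k, (Real.exp (-(s * g k false)) + Real.exp (-(s * g k true))) := step2
    _ ≤ Real.exp (s / 20) * (2 ^ (B / 2) * Real.exp (-(M / (4 * c)))) :=
        mul_le_mul_of_nonneg_left step3 (Real.exp_nonneg _)
    _ = 2 ^ (B / 2) * Real.exp (s / 20 - M / (4 * c)) := by
        rw [mul_left_comm, ← Real.exp_add]
        congr 2
    _ ≤ 2 ^ (B / 2) * Real.exp (-(B : ℝ) ^ ((1 : ℝ) - 7 * γ) / 80) :=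
        mul_le_mul_of_nonneg_left (Real.exp_le_exp.mpr hexp_le) (by positivity)
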